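/- The kernel g is continuous on (0, ∞), and lim_{t → 0⁺} t^{1-γ} g(t) = 0. In particular, the function t ↦ t^{1-γ} g(t) extends continuously to [0, ∞) with value 0 at t = 0. -/

import Mathlib

open MeasureTheory Real Set Filter

namespace Stmt7Aux

lemma rpow_le_max {r α : ℝ} (hr : 0 < r) (h0 : 0 ≤ α) (h1 : α ≤ 1) : r ^ α ≤ max 1 r := by
  rcases le_total r 1 with h | h
  · exact le_max_of_le_left (Real.rpow_le_one hr.le h h0)
  · calc r ^ α ≤ r ^ (1 : ℝ) := Real.rpow_le_rpow_of_exponent_le h h1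
      _ = r := Real.rpow_one r
      _ ≤ max 1 r := le_max_right _ _

lemma meas_kernel (μ : ℝ → ℝ) (hμ_int : IntegrableOn μ (Ioo 0 1))
    (f : ℝ → ℝ) (hf : Continuous f) {r : ℝ} (hr : r ≠ 0) :
    AEStronglyMeasurable (fun α => f (π * α) * r ^ α * μ α)
      (volume.restrict (Ioo (0:ℝ) 1)) := by
  apply AEStronglyMeasurable.mul _ hμ_int.aestronglyMeasurable
  have hcont : Continuous fun α : ℝ => r ^ α :=
    continuous_iff_continuousAt.2 fun b => Real.continuousAt_const_rpow hr
  exact ((hf.comp (continuous_const.mul continuous_id)).mul hcont).aestronglyMeasurable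

lemma integ_kernel (μ : ℝ → ℝ) (hμ_int : IntegrableOn μ (Ioo 0 1))
    (f : ℝ → ℝ) (hf : Continuous f) (hf1 : ∀ x, |f x| ≤ 1) {r : ℝ} (hr : 0 < r) :
    IntegrableOn (fun α => f (π * α) * r ^ α * μ α) (Ioo 0 1) := by
  apply Integrable.mono' (hμ_int.norm.const_mul (max 1 r))
    (meas_kernel μ hμ_int f hf hr.ne')
  filter_upwards [ae_restrict_mem measurableSet_Ioo] with α hα
  have h1 : |f (π * α) * r ^ α * μ α| = |f (π * α)| * r ^ α * |μ α| := by
    rw [abs_mul, abs_mul, abs_of_nonneg (Real.rpow_nonneg hr.le α)]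
  rw [Real.norm_eq_abs, h1]
  have h2 : |f (π * α)| * r ^ α ≤ 1 * max 1 r :=
    mul_le_mul (hf1 _) (rpow_le_max hr hα.1.le hα.2.le) (Real.rpow_nonneg hr.le α) zero_le_one
  calc |f (π * α)| * r ^ α * |μ α| ≤ 1 * max 1 r * |μ α| :=
        mul_le_mul_of_nonneg_right h2 (abs_nonneg _)
    _ = max 1 r * ‖μ α‖ := by rw [one_mul, Real.norm_eq_abs]

lemma cont_integral (μ : ℝ → ℝ) (hμ_int : IntegrableOn μ (Ioo 0 1))
    (f : ℝ → ℝ) (hf : Continuous f) (hf1 : ∀ x, |f x| ≤ 1) :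
    ContinuousOn (fun r => ∫ α in Ioo (0:ℝ) 1, f (π * α) * r ^ α * μ α) (Ioi 0) := by
  intro r0 hr0
  apply ContinuousAt.continuousWithinAt
  have hr0' : (0:ℝ) < r0 := hr0
  apply continuousAt_of_dominated
    (bound := fun α => max 1 (2 * r0) * ‖μ α‖)
  · filter_upwards [isOpen_Ioi.mem_nhds hr0'] with r hr
    exact meas_kernel μ hμ_int f hf (ne_of_gt hr)
  · filter_upwards [isOpen_Ioo.mem_nhds (show r0 ∈ Ioo 0 (2 * r0) by
      constructor <;> linarith)] with r hr
    filter_upwards [ae_restrict_mem measurableSet_Ioo] with α hα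
    have h1 : |f (π * α) * r ^ α * μ α| = |f (π * α)| * r ^ α * |μ α| := by
      rw [abs_mul, abs_mul, abs_of_nonneg (Real.rpow_nonneg hr.1.le α)]
    rw [Real.norm_eq_abs, h1]
    have h3 : r ^ α ≤ max 1 (2 * r0) :=
      le_trans (rpow_le_max hr.1 hα.1.le hα.2.le)
        (max_le_max le_rfl hr.2.le)
    have h2 : |f (π * α)| * r ^ α ≤ 1 * max 1 (2 * r0) :=
      mul_le_mul (hf1 _) h3 (Real.rpow_nonneg hr.1.le α) zero_le_one
    calc |f (π * α)| * r ^ α * |μ α| ≤ 1 * max 1 (2 * r0) * |μ α| :=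
          mul_le_mul_of_nonneg_right h2 (abs_nonneg _)
      _ = max 1 (2 * r0) * ‖μ α‖ := by rw [one_mul, Real.norm_eq_abs]
  · exact hμ_int.norm.const_mul _
  · apply ae_of_all
    intro α
    exact (continuousAt_const.mul
      (Real.continuousAt_rpow_const r0 α (Or.inl hr0'.ne'))).mul continuousAt_const

lemma sin_lb {γ α : ℝ} (hγ0 : 0 < γ) (hγ2 : γ < 1/2) (hα : α ∈ Ioo γ (1 - γ)) :
    Real.sin (π * γ) ≤ Real.sin (π * α) := by
  have hπ := Real.pi_pos
  rcases le_total α (1/2) with h | h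
  · apply Real.strictMonoOn_sin.monotoneOn ⟨by nlinarith, by nlinarith⟩
      ⟨by nlinarith [hα.1], by nlinarith⟩
    nlinarith [hα.1]
  · have : Real.sin (π * α) = Real.sin (π * (1 - α)) := by
      rw [show π * (1 - α) = π - π * α by ring, Real.sin_pi_sub]
    rw [this]
    apply Real.strictMonoOn_sin.monotoneOn ⟨by nlinarith, by nlinarith⟩
      ⟨by nlinarith [hα.2], by nlinarith⟩
    nlinarith [hα.2]

lemma S_lower (μ : ℝ → ℝ) (hμ_int : IntegrableOn μ (Ioo 0 1))
    (hμ_nonneg : ∀ α ∈ Ioo (0:ℝ) 1, 0 ≤ μ α)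
    {a b s0 c r : ℝ} (ha : 0 < a) (hb : b ≤ 1) (hr : 0 < r)
    (hs0 : ∀ α ∈ Ioo a b, s0 ≤ Real.sin (π * α)) (hs0' : 0 ≤ s0)
    (hc : ∀ α ∈ Ioo a b, r ^ c ≤ r ^ α) :
    s0 * r ^ c * ∫ α in Ioo a b, μ α ≤
      ∫ α in Ioo (0:ℝ) 1, Real.sin (π * α) * r ^ α * μ α := by
  have hsub : Ioo a b ⊆ Ioo 0 1 := Ioo_subset_Ioo ha.le hb
  have hker : IntegrableOn (fun α => Real.sin (π * α) * r ^ α * μ α) (Ioo 0 1) :=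
    integ_kernel μ hμ_int Real.sin Real.continuous_sin (fun x => Real.abs_sin_le_one x) hr
  calc s0 * r ^ c * ∫ α in Ioo a b, μ α
      = ∫ α in Ioo a b, s0 * r ^ c * μ α := (integral_const_mul _ _).symm
    _ ≤ ∫ α in Ioo a b, Real.sin (π * α) * r ^ α * μ α := by
        apply setIntegral_mono_on ((hμ_int.mono_set hsub).const_mul _)
          (hker.mono_set hsub) measurableSet_Ioo
        intro α hαab
        have hα : α ∈ Ioo (0:ℝ) 1 := hsub hαab
        have h1 : s0 * r ^ c ≤ Real.sin (π * α) * r ^ α :=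
          mul_le_mul (hs0 α hαab) (hc α hαab) (Real.rpow_nonneg hr.le c)
            (le_trans hs0' (hs0 α hαab))
        exact mul_le_mul_of_nonneg_right h1 (hμ_nonneg α hα)
    _ ≤ ∫ α in Ioo (0:ℝ) 1, Real.sin (π * α) * r ^ α * μ α := by
        apply setIntegral_mono_set hker
        · filter_upwards [ae_restrict_mem measurableSet_Ioo] with α hα
          have hs : 0 ≤ Real.sin (π * α) := by
            apply Real.sin_nonneg_of_nonneg_of_le_pi
            · nlinarith [Real.pi_pos, hα.1]
            · nlinarith [Real.pi_pos, hα.2]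
          exact mul_nonneg (mul_nonneg hs (Real.rpow_nonneg hr.le α)) (hμ_nonneg α hα)
        · exact HasSubset.Subset.eventuallyLE hsub

end Stmt7Aux

open Stmt7Aux

set_option maxHeartbeats 2000000 in
/-- The kernel `g` is continuous on `(0, ∞)`, and
`lim_{t → 0⁺} t^{1-γ} g(t) = 0`; in particular `t ↦ t^{1-γ} g(t)` extends
continuously to `[0, ∞)` with value `0` at `t = 0`. -/
theorem stmt_7 (μ : ℝ → ℝ)
    (hμ_int : IntegrableOn μ (Ioo 0 1))
    (hμ_nonneg : ∀ α ∈ Ioo (0:ℝ) 1, 0 ≤ μ α)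
    (hμ_ne : ¬ (∀ᵐ α ∂(volume.restrict (Ioo (0:ℝ) 1)), μ α = 0))
    (hcμ : 0 < ∫ α in Ioo (0:ℝ) 1, μ α)
    (γ : ℝ) (hγ : γ ∈ Ioo (0:ℝ) (1/2))
    (hγμ : (∫ α in Ioo γ (1 - γ), μ α) = ((1 - γ) / 2) * ∫ α in Ioo (0:ℝ) 1, μ α)
    (S C g : ℝ → ℝ)
    (hS : ∀ r : ℝ, S r = ∫ α in Ioo (0:ℝ) 1, Real.sin (π * α) * r ^ α * μ α)
    (hC : ∀ r : ℝ, C r = ∫ α in Ioo (0:ℝ) 1, Real.cos (π * α) * r ^ α * μ α)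
    (hg : ∀ t : ℝ, 0 < t →
      g t = (1/π) * ∫ r in Ioi (0:ℝ), Real.exp (-r * t) * S r / ((S r)^2 + (C r)^2)) :
    ContinuousOn g (Ioi 0) ∧
    Tendsto (fun t : ℝ => t ^ (1 - γ) * g t) (nhdsWithin 0 (Ioi 0)) (nhds 0) ∧
    ContinuousOn (fun t : ℝ => if t = 0 then 0 else t ^ (1 - γ) * g t) (Ici 0) := by
  have hπ := Real.pi_pos
  have hγ0 : 0 < γ := hγ.1
  have hγ2 : γ < 1/2 := hγ.2
  -- continuity of S and C on (0, ∞)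
  have hScont : ContinuousOn S (Ioi 0) := by
    rw [funext hS]
    exact cont_integral μ hμ_int Real.sin Real.continuous_sin Real.abs_sin_le_one
  have hCcont : ContinuousOn C (Ioi 0) := by
    rw [funext hC]
    exact cont_integral μ hμ_int Real.cos Real.continuous_cos Real.abs_cos_le_one
  -- positive mass on (γ, 1-γ)
  have hm1 : 0 < ∫ α in Ioo γ (1 - γ), μ α := by
    rw [hγμ]; exact mul_pos (by linarith) hcμ
  -- find δ with positive mass on (γ+δ, 1-γ)
  obtain ⟨δ, hδ0, hδlt, hm2⟩ : ∃ δ : ℝ, 0 < δ ∧ γ + δ < 1 - γ ∧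
      0 < ∫ α in Ioo (γ + δ) (1 - γ), μ α := by
    set sq : ℕ → Set ℝ := fun n => Ioo (γ + (1 - 2*γ)/((n:ℝ)+2)) (1-γ) with hsq
    have hposn : ∀ n : ℕ, 0 < (1 - 2*γ)/((n:ℝ)+2) :=
      fun n => div_pos (by linarith) (by positivity)
    have hmono : Monotone sq := by
      intro i j hij
      apply Ioo_subset_Ioo _ le_rfl
      have h2 : ((i:ℝ)+2) ≤ ((j:ℝ)+2) := by
        have : (i:ℝ) ≤ (j:ℝ) := Nat.cast_le.2 hij
        linarith
      have h3 : (1 - 2*γ)/((j:ℝ)+2) ≤ (1 - 2*γ)/((i:ℝ)+2) := by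
        apply div_le_div_of_nonneg_left (by linarith) (by positivity) h2
      linarith
    have hunion : (⋃ n, sq n) = Ioo γ (1-γ) := by
      apply Subset.antisymm
      · apply iUnion_subset; intro n
        apply Ioo_subset_Ioo _ le_rfl
        linarith [hposn n]
      · intro x hx
        obtain ⟨n, hn⟩ := exists_nat_gt ((1 - 2*γ)/(x - γ))
        have hxγ : 0 < x - γ := by linarith [hx.1]
        have hn' : 1 - 2*γ < (n:ℝ) * (x - γ) := (div_lt_iff₀ hxγ).1 hn
        refine mem_iUnion.2 ⟨n, ?_, hx.2⟩
        have h2 : (1 - 2*γ)/((n:ℝ)+2) < x - γ := by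
          rw [div_lt_iff₀ (show (0:ℝ) < (n:ℝ)+2 by positivity)]
          nlinarith [hxγ, (Nat.cast_nonneg n : (0:ℝ) ≤ (n:ℝ))]
        show γ + (1 - 2*γ)/((n:ℝ)+2) < x
        linarith
    have htend := tendsto_setIntegral_of_monotone (μ := volume) (f := μ)
      (fun n => measurableSet_Ioo) hmono
      (by rw [hunion]; exact hμ_int.mono_set (Ioo_subset_Ioo hγ0.le (by linarith)))
    rw [hunion] at htend
    obtain ⟨n, hn⟩ := (htend.eventually (eventually_gt_nhds hm1)).exists
    refine ⟨(1 - 2*γ)/((n:ℝ)+2), hposn n, ?_, hn⟩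
    have h2 : (1 - 2*γ)/((n:ℝ)+2) ≤ (1 - 2*γ)/2 := by
      apply div_le_div_of_nonneg_left (by linarith) (by norm_num)
      have : (0:ℝ) ≤ (n:ℝ) := Nat.cast_nonneg n
      linarith
    linarith
  -- constants
  set s0 := Real.sin (π * γ) with hs0def
  have hs0 : 0 < s0 := Real.sin_pos_of_pos_of_lt_pi (by positivity) (by nlinarith)
  set K1 := s0 * ∫ α in Ioo γ (1 - γ), μ α with hK1def
  set K2 := s0 * ∫ α in Ioo (γ + δ) (1 - γ), μ α with hK2def
  have hK1 : 0 < K1 := mul_pos hs0 hm1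
  have hK2 : 0 < K2 := mul_pos hs0 hm2
  -- lower bounds for S
  have hSl1 : ∀ r : ℝ, 0 < r → r ≤ 1 → K1 * r ^ (1 - γ) ≤ S r := by
    intro r hr hr1
    rw [hS r]
    have h := S_lower μ hμ_int hμ_nonneg (a := γ) (b := 1-γ) (s0 := s0) (c := 1-γ) (r := r)
      hγ0 (by linarith) hr (fun α hα => sin_lb hγ0 hγ2 hα) hs0.le
      (fun α hα => Real.rpow_le_rpow_of_exponent_ge hr hr1 hα.2.le)
    calc K1 * r ^ (1-γ) = s0 * r ^ (1-γ) * ∫ α in Ioo γ (1 - γ), μ α := by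
          rw [hK1def]; ring
      _ ≤ _ := h
  have hSl2 : ∀ r : ℝ, 1 ≤ r → K2 * r ^ (γ + δ) ≤ S r := by
    intro r hr1
    have hr : (0:ℝ) < r := by linarith
    rw [hS r]
    have h := S_lower μ hμ_int hμ_nonneg (a := γ+δ) (b := 1-γ) (s0 := s0) (c := γ+δ) (r := r)
      (by linarith) (by linarith) hr
      (fun α hα => sin_lb hγ0 hγ2 ⟨by linarith [hα.1], hα.2⟩) hs0.le
      (fun α hα => Real.rpow_le_rpow_of_exponent_le hr1 hα.1.le)
    calc K2 * r ^ (γ+δ) = s0 * r ^ (γ+δ) * ∫ α in Ioo (γ + δ) (1 - γ), μ α := by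
          rw [hK2def]; ring
      _ ≤ _ := h
  have hSpos : ∀ r : ℝ, 0 < r → 0 < S r := by
    intro r hr
    rcases le_total r 1 with h | h
    · refine lt_of_lt_of_le ?_ (hSl1 r hr h)
      have := Real.rpow_pos_of_pos hr (1-γ); positivity
    · refine lt_of_lt_of_le ?_ (hSl2 r h)
      have := Real.rpow_pos_of_pos (by linarith : (0:ℝ) < r) (γ+δ); positivity
  have hden : ∀ r : ℝ, 0 < r → 0 < S r ^ 2 + C r ^ 2 := by
    intro r hr; nlinarith [hSpos r hr, sq_nonneg (C r)]
  -- the integrand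
  set F : ℝ → ℝ → ℝ := fun t r => Real.exp (-r * t) * S r / (S r ^ 2 + C r ^ 2) with hFdef
  have hgF : ∀ t : ℝ, 0 < t → g t = (1/π) * ∫ r in Ioi (0:ℝ), F t r := by
    intro t ht; simp only [hFdef]; exact hg t ht
  -- basic bound
  have hFb : ∀ t r : ℝ, 0 ≤ t → 0 < r → |F t r| ≤ Real.exp (-r * t) / S r := by
    intro t r ht hr
    have hSr := hSpos r hr
    have hd := hden r hr
    have hnum : 0 ≤ Real.exp (-r * t) * S r := mul_nonneg (Real.exp_nonneg _) hSr.le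
    simp only [hFdef]
    rw [abs_of_nonneg (div_nonneg hnum hd.le)]
    calc Real.exp (-r*t) * S r / (S r^2 + C r^2) ≤ Real.exp (-r*t) * S r / (S r^2) := by
          apply div_le_div_of_nonneg_left hnum (by positivity) (by nlinarith [sq_nonneg (C r)])
      _ = Real.exp (-r*t) / S r := by rw [sq]; exact mul_div_mul_right _ _ hSr.ne'
  have hFb1 : ∀ t r : ℝ, 0 ≤ t → 0 < r → r ≤ 1 → |F t r| ≤ (1/K1) * r ^ (γ - 1) := by
    intro t r ht hr hr1
    refine le_trans (hFb t r ht hr) ?_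
    have h1 : Real.exp (-r*t) ≤ 1 := Real.exp_le_one_iff.2 (by nlinarith)
    have h2 : Real.exp (-r*t)/S r ≤ 1 / (K1 * r ^ (1-γ)) :=
      div_le_div₀ zero_le_one h1 (by positivity) (hSl1 r hr hr1)
    refine le_trans h2 (le_of_eq ?_)
    rw [one_div, mul_inv, show γ - 1 = -(1-γ) by ring, Real.rpow_neg hr.le, one_div]
  have hFb2 : ∀ t r : ℝ, 0 ≤ t → 1 ≤ r →
      |F t r| ≤ (1/K2) * (r ^ ((1-γ-δ)-1) * Real.exp (-(t*r))) := by
    intro t r ht hr1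
    have hr : (0:ℝ) < r := by linarith
    refine le_trans (hFb t r ht hr) ?_
    have heq : (1/K2) * (r ^ ((1-γ-δ)-1) * Real.exp (-(t*r)))
        = Real.exp (-r*t) / (K2 * r ^ (γ+δ)) := by
      rw [show (1-γ-δ)-1 = -(γ+δ) by ring, Real.rpow_neg hr.le, show -(t*r) = -r*t by ring,
        div_eq_mul_inv, mul_inv]
      ring
    rw [heq]
    exact div_le_div_of_nonneg_left (Real.exp_nonneg _) (by positivity) (hSl2 r hr1)
  -- continuity & measurability of r ↦ F t r
  have hFcont : ∀ t : ℝ, ContinuousOn (fun r => F t r) (Ioi 0) := by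
    intro t
    simp only [hFdef]
    apply ContinuousOn.div
    · exact ((Real.continuous_exp.comp (continuous_id.neg.mul continuous_const)).continuousOn).mul
        hScont
    · exact (hScont.pow 2).add (hCcont.pow 2)
    · intro r hr; exact (hden r hr).ne'
  have hFmeas : ∀ t : ℝ, ∀ s : Set ℝ, MeasurableSet s → s ⊆ Ioi 0 →
      AEStronglyMeasurable (F t) (volume.restrict s) :=
    fun t s hs hsub => ((hFcont t).mono hsub).aestronglyMeasurable hs
  -- integrable comparison functions
  have hint_rpow : IntegrableOn (fun r : ℝ => (1/K1) * r ^ (γ - 1)) (Ioc (0:ℝ) 1) := by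
    apply Integrable.const_mul
    exact (intervalIntegral.intervalIntegrable_rpow' (show (-1:ℝ) < γ - 1 by linarith)).1
  have hint_exp : ∀ a : ℝ, 0 < a →
      IntegrableOn (fun r : ℝ => (1/K2) * Real.exp (-(a * r))) (Ioi (1:ℝ)) := by
    intro a ha
    have h := (exp_neg_integrableOn_Ioi 1 ha).const_mul (1/K2)
    simpa [neg_mul, IntegrableOn] using h
  have hint_gamma : ∀ t : ℝ, 0 < t →
      IntegrableOn (fun r : ℝ => r ^ ((1-γ-δ)-1) * Real.exp (-(t*r))) (Ioi (0:ℝ)) := by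
    intro t ht
    have h := integrableOn_rpow_mul_exp_neg_mul_rpow
      (show (-1:ℝ) < (1-γ-δ)-1 by linarith) zero_lt_one ht
    apply h.congr_fun ?_ measurableSet_Ioi
    intro x hx
    simp only [Real.rpow_one, neg_mul]
  -- integrability of F t
  have hFint : ∀ t : ℝ, 0 < t → IntegrableOn (F t) (Ioi (0:ℝ)) := by
    intro t ht
    rw [← Ioc_union_Ioi_eq_Ioi (zero_le_one (α := ℝ))]
    apply IntegrableOn.union
    · apply Integrable.mono' hint_rpow (hFmeas t _ measurableSet_Ioc Ioc_subset_Ioi_self)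
      filter_upwards [ae_restrict_mem measurableSet_Ioc] with r hr
      rw [Real.norm_eq_abs]
      exact hFb1 t r ht.le hr.1 hr.2
    · apply Integrable.mono' (hint_exp t ht)
        (hFmeas t _ measurableSet_Ioi (Ioi_subset_Ioi zero_le_one))
      filter_upwards [ae_restrict_mem measurableSet_Ioi] with r hr
      have hr1 : (1:ℝ) ≤ r := le_of_lt hr
      have hr0 : (0:ℝ) < r := by linarith
      rw [Real.norm_eq_abs]
      refine le_trans (hFb t r ht.le hr0) ?_
      have hS2 : K2 ≤ S r := by
        refine le_trans ?_ (hSl2 r hr1)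
        nlinarith [Real.one_le_rpow hr1 (by positivity : (0:ℝ) ≤ γ + δ)]
      calc Real.exp (-r*t) / S r ≤ Real.exp (-(t*r)) / K2 :=
            div_le_div₀ (Real.exp_nonneg _) (by rw [show -(t*r) = -r*t by ring]) hK2 hS2
        _ = (1/K2) * Real.exp (-(t*r)) := by rw [one_div_mul_eq_div]
  -- main estimate
  set A : ℝ := (1/K1) * (1/γ) with hAdef
  set Gc : ℝ := (1/K2) * Real.Gamma (1-γ-δ) with hGcdef
  have hGamma_pos : 0 < Real.Gamma (1-γ-δ) := Real.Gamma_pos_of_pos (by linarith)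
  have hEst : ∀ t : ℝ, 0 < t → |∫ r in Ioi (0:ℝ), F t r| ≤ A + Gc * t ^ (γ + δ - 1) := by
    intro t ht
    have hint := hFint t ht
    have hintIoc : IntegrableOn (F t) (Ioc (0:ℝ) 1) := hint.mono_set Ioc_subset_Ioi_self
    have hintIoi : IntegrableOn (F t) (Ioi (1:ℝ)) := hint.mono_set (Ioi_subset_Ioi zero_le_one)
    have h1 : (∫ r in Ioc (0:ℝ) 1, |F t r|) ≤ A := by
      calc (∫ r in Ioc (0:ℝ) 1, |F t r|) ≤ ∫ r in Ioc (0:ℝ) 1, (1/K1) * r ^ (γ-1) := by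
            apply setIntegral_mono_on hintIoc.abs hint_rpow measurableSet_Ioc
            intro r hr
            exact hFb1 t r ht.le hr.1 hr.2
        _ = A := by
            rw [hAdef, integral_const_mul]
            congr 1
            rw [← intervalIntegral.integral_of_le (zero_le_one (α := ℝ)),
              integral_rpow (Or.inl (by linarith : (-1:ℝ) < γ-1))]
            have hγe : γ - 1 + 1 = γ := by ring
            rw [hγe, Real.one_rpow, Real.zero_rpow hγ0.ne']
            rw [one_div]
            ring
    have h2 : (∫ r in Ioi (1:ℝ), |F t r|) ≤ Gc * t ^ (γ+δ-1) := by
      calc (∫ r in Ioi (1:ℝ), |F t r|)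
          ≤ ∫ r in Ioi (1:ℝ), (1/K2) * (r ^ ((1-γ-δ)-1) * Real.exp (-(t*r))) := by
            apply setIntegral_mono_on hintIoi.abs
              (((hint_gamma t ht).mono_set (Ioi_subset_Ioi zero_le_one)).const_mul _)
              measurableSet_Ioi
            intro r hr
            exact hFb2 t r ht.le (le_of_lt hr)
        _ ≤ (1/K2) * ∫ r in Ioi (0:ℝ), r ^ ((1-γ-δ)-1) * Real.exp (-(t*r)) := by
            rw [integral_const_mul]
            apply mul_le_mul_of_nonneg_left _ (by positivity)
            apply setIntegral_mono_set (hint_gamma t ht)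
            · filter_upwards [ae_restrict_mem measurableSet_Ioi] with r hr
              exact mul_nonneg (Real.rpow_nonneg (le_of_lt hr) _) (Real.exp_nonneg _)
            · exact HasSubset.Subset.eventuallyLE (Ioi_subset_Ioi zero_le_one)
        _ = Gc * t ^ (γ+δ-1) := by
            rw [integral_rpow_mul_exp_neg_mul_Ioi (by linarith : (0:ℝ) < 1-γ-δ) ht]
            have hh : ((1:ℝ)/t) ^ (1-γ-δ) = t ^ (γ+δ-1) := by
              rw [one_div, ← Real.rpow_neg_one t, ← Real.rpow_mul ht.le,
                show (-1) * (1-γ-δ) = γ+δ-1 by ring]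
            rw [hh, hGcdef]
            ring
    calc |∫ r in Ioi (0:ℝ), F t r| ≤ ∫ r in Ioi (0:ℝ), |F t r| := by
          simpa [Real.norm_eq_abs] using
            norm_integral_le_integral_norm (μ := volume.restrict (Ioi (0:ℝ))) (F t)
      _ = (∫ r in Ioc (0:ℝ) 1, |F t r|) + ∫ r in Ioi (1:ℝ), |F t r| := by
          rw [← Ioc_union_Ioi_eq_Ioi (zero_le_one (α := ℝ)),
            setIntegral_union (Ioc_disjoint_Ioi le_rfl) measurableSet_Ioi
              hintIoc.abs hintIoi.abs]
      _ ≤ A + Gc * t ^ (γ+δ-1) := add_le_add h1 h2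
  -- Part 2: the rescaled limit at 0⁺
  have hTend : Tendsto (fun t : ℝ => t ^ (1-γ) * g t) (nhdsWithin 0 (Ioi 0)) (nhds 0) := by
    have hrp : ∀ p : ℝ, 0 < p →
        Tendsto (fun t : ℝ => t ^ p) (nhdsWithin 0 (Ioi 0)) (nhds 0) := by
      intro p hp
      have h0 : (0:ℝ) ^ p = 0 := Real.zero_rpow hp.ne'
      have h := (Real.continuousAt_rpow_const 0 p (Or.inr hp.le)).tendsto
      rw [h0] at h
      exact h.mono_left nhdsWithin_le_nhds
    have hlim : Tendsto (fun t : ℝ => (1/π) * (A * t ^ (1-γ) + Gc * t ^ δ))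
        (nhdsWithin 0 (Ioi 0)) (nhds 0) := by
      have h := (((hrp (1-γ) (by linarith)).const_mul A).add
        ((hrp δ hδ0).const_mul Gc)).const_mul (1/π)
      simpa using h
    apply squeeze_zero_norm' _ hlim
    filter_upwards [self_mem_nhdsWithin] with t ht
    have ht : (0:ℝ) < t := ht
    rw [hgF t ht]
    have h1 : ‖t ^ (1-γ) * ((1/π) * ∫ r in Ioi (0:ℝ), F t r)‖
        = (1/π) * (t ^ (1-γ) * |∫ r in Ioi (0:ℝ), F t r|) := by
      rw [Real.norm_eq_abs, abs_mul, abs_mul, abs_of_nonneg (Real.rpow_nonneg ht.le _),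
        abs_of_nonneg (by positivity : (0:ℝ) ≤ 1/π)]
      ring
    rw [h1]
    apply mul_le_mul_of_nonneg_left _ (by positivity)
    calc t ^ (1-γ) * |∫ r in Ioi (0:ℝ), F t r| ≤ t ^ (1-γ) * (A + Gc * t ^ (γ+δ-1)) :=
          mul_le_mul_of_nonneg_left (hEst t ht) (Real.rpow_nonneg ht.le _)
      _ = A * t ^ (1-γ) + Gc * (t ^ (1-γ) * t ^ (γ+δ-1)) := by ring
      _ = A * t ^ (1-γ) + Gc * t ^ δ := by
          rw [← Real.rpow_add ht, show (1-γ)+(γ+δ-1) = δ by ring]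
  -- Part 1: continuity of g on (0, ∞)
  have hgCA : ∀ t0 : ℝ, 0 < t0 → ContinuousAt g t0 := by
    intro t0 ht0
    have hcongr : (fun t => (1/π) * ∫ r in Ioi (0:ℝ), F t r) =ᶠ[nhds t0] g := by
      filter_upwards [isOpen_Ioi.mem_nhds ht0] with t ht
      exact (hgF t ht).symm
    apply ContinuousAt.congr _ hcongr
    apply ContinuousAt.mul continuousAt_const
    apply continuousAt_of_dominated
      (bound := fun r => if r ≤ 1 then (1/K1) * r ^ (γ-1) else (1/K2) * Real.exp (-(t0/2 * r)))
    · exact Eventually.of_forall fun t => hFmeas t _ measurableSet_Ioi (subset_rfl)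
    · filter_upwards [isOpen_Ioi.mem_nhds (show t0 ∈ Ioi (t0/2) by
        simp only [mem_Ioi]; linarith)] with t htmem
      have ht2 : t0/2 < t := htmem
      rw [ae_restrict_iff' measurableSet_Ioi]
      apply ae_of_all
      intro r hr
      have hr0 : (0:ℝ) < r := hr
      rw [Real.norm_eq_abs]
      split_ifs with h
      · exact hFb1 t r (by linarith) hr0 h
      · push_neg at h
        have hr1 : (1:ℝ) ≤ r := h.le
        refine le_trans (hFb t r (by linarith) hr0) ?_
        have hS2 : K2 ≤ S r := by
          refine le_trans ?_ (hSl2 r hr1)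
          nlinarith [Real.one_le_rpow hr1 (by positivity : (0:ℝ) ≤ γ + δ)]
        calc Real.exp (-r*t) / S r ≤ Real.exp (-(t0/2*r)) / K2 := by
              apply div_le_div₀ (Real.exp_nonneg _) _ hK2 hS2
              apply Real.exp_le_exp.2
              nlinarith
          _ = (1/K2) * Real.exp (-(t0/2*r)) := by rw [one_div_mul_eq_div]
    · have hbint : IntegrableOn
          (fun r => if r ≤ 1 then (1/K1) * r ^ (γ-1) else (1/K2) * Real.exp (-(t0/2 * r)))
          (Ioc (0:ℝ) 1 ∪ Ioi 1) := by
        apply IntegrableOn.union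
        · apply hint_rpow.congr_fun ?_ measurableSet_Ioc
          intro r hr
          simp [hr.2]
        · apply (hint_exp (t0/2) (by linarith)).congr_fun ?_ measurableSet_Ioi
          intro r hr
          have hgt : ¬ r ≤ 1 := not_le.2 hr
          simp [hgt]
      rwa [Ioc_union_Ioi_eq_Ioi (zero_le_one (α := ℝ))] at hbint
    · apply ae_of_all
      intro r
      simp only [hFdef]
      apply ContinuousAt.div_const
      apply ContinuousAt.mul _ continuousAt_const
      exact (Real.continuous_exp.comp (continuous_const.mul continuous_id)).continuousAt
  have hgCont : ContinuousOn g (Ioi 0) := fun t ht => (hgCA t ht).continuousWithinAt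
  refine ⟨hgCont, hTend, ?_⟩
  -- Part 3: continuity of the extension on [0, ∞)
  intro x hx
  rcases eq_or_lt_of_le (mem_Ici.1 hx) with h0 | hxpos
  · have hx0 : x = 0 := h0.symm
    subst hx0
    rw [show Ici (0:ℝ) = insert 0 (Ioi 0) from Set.Ioi_insert.symm]
    rw [continuousWithinAt_insert_self]
    show Tendsto (fun t : ℝ => if t = 0 then (0:ℝ) else t ^ (1-γ) * g t)
      (nhdsWithin 0 (Ioi 0))
      (nhds ((fun t : ℝ => if t = 0 then (0:ℝ) else t ^ (1-γ) * g t) 0))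
    rw [show (fun t : ℝ => if t = 0 then (0:ℝ) else t ^ (1-γ) * g t) 0 = 0 from by simp]
    apply Tendsto.congr' _ hTend
    filter_upwards [self_mem_nhdsWithin] with t ht
    rw [if_neg (ne_of_gt ht)]
  · apply ContinuousAt.continuousWithinAt
    have hca : ContinuousAt (fun t : ℝ => t ^ (1-γ) * g t) x :=
      (Real.continuousAt_rpow_const x (1-γ) (Or.inl hxpos.ne')).mul (hgCA x hxpos)
    apply ContinuousAt.congr hca
    filter_upwards [isOpen_Ioi.mem_nhds hxpos] with t ht
    rw [if_neg (ne_of_gt ht)]
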